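/- Let K ≥ 1, N ≥ 1, and let μ^1,…,μ^N be probability measures on ℝ^d that are absolutely continuous with respect to Lebesgue measure and have finite second moments, and let μ̄ = (1/N) Σ_{i=1}^N μ^i. Then the infimum over all centers x = (x_1,…,x_K) ∈ (ℝ^d)^K and all families of weight vectors a = (a^1,…,a^N) ∈ (Σ_K)^N of (1/N) Σ_{i=1}^N W2²(Σ_{k=1}^K a^i_k δ_{x_k}, μ^i) is equal to the infimum over all centers x ∈ (ℝ^d)^K of W2²(Σ_{k=1}^K μ̄(V_k) δ_{x_k}, μ̄), where V_1,…,V_K are the tie-broken Voronoi cells of x_1,…,x_K. -/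

import Mathlib

open MeasureTheory
open scoped ENNReal BigOperators

noncomputable section

/-- `ℝ^d` as a Euclidean space. -/
abbrev Rd (d : ℕ) := EuclideanSpace ℝ (Fin d)

/-- Squared 2-Wasserstein distance: infimum over all couplings `π` (probability measures on the
product whose first marginal is `μ` and second marginal is `ν`) of the quadratic cost. -/
def W2sq {d : ℕ} (μ ν : Measure (Rd d)) : ℝ≥0∞ :=
  ⨅ (π : Measure (Rd d × Rd d)) (_ : IsProbabilityMeasure π)
    (_ : π.map Prod.fst = μ) (_ : π.map Prod.snd = ν),
    ∫⁻ p, ENNReal.ofReal (‖p.1 - p.2‖ ^ 2) ∂π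

/-- The discrete measure `∑ k, a k • δ_{x k}`. -/
def discreteMeasure {d K : ℕ} (a : Fin K → ℝ≥0∞) (x : Fin K → Rd d) : Measure (Rd d) :=
  ∑ k, a k • Measure.dirac (x k)

/-- The tie-broken Voronoi cell of the center `x k`. -/
def voronoi {d K : ℕ} (x : Fin K → Rd d) (k : Fin K) : Set (Rd d) :=
  {z | (∀ j, ‖z - x k‖ ≤ ‖z - x j‖) ∧ ∀ j, j < k → ‖z - x k‖ < ‖z - x j‖}

/-- A measure has a finite second moment. -/
def FiniteSecondMoment {d : ℕ} (μ : Measure (Rd d)) : Prop :=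
  ∫⁻ y, ENNReal.ofReal (‖y‖ ^ 2) ∂μ < ⊤

namespace BarKMeans

open scoped Classical

variable {d K : ℕ} [NeZero K]

lemma univ_ne : (Finset.univ : Finset (Fin K)).Nonempty := Finset.univ_nonempty

/-- distance to the nearest center -/
def minDist (x : Fin K → Rd d) (z : Rd d) : ℝ :=
  Finset.univ.inf' univ_ne fun k => ‖z - x k‖

lemma minDist_le (x : Fin K → Rd d) (z : Rd d) (k : Fin K) : minDist x z ≤ ‖z - x k‖ :=
  Finset.inf'_le _ (Finset.mem_univ k)

lemma minDist_nonneg (x : Fin K → Rd d) (z : Rd d) : 0 ≤ minDist x z :=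
  Finset.le_inf' _ _ fun _ _ => norm_nonneg _

lemma continuous_minDist (x : Fin K → Rd d) : Continuous (minDist x) :=
  Continuous.finset_inf'_apply univ_ne fun k _ => (continuous_id.sub continuous_const).norm

/-- quantization cost -/
def Q (x : Fin K → Rd d) (ν : Measure (Rd d)) : ℝ≥0∞ :=
  ∫⁻ z, ENNReal.ofReal ((minDist x z) ^ 2) ∂ν

lemma measurable_qint (x : Fin K → Rd d) :
    Measurable fun z => ENNReal.ofReal ((minDist x z) ^ 2) :=
  (((continuous_minDist x).pow 2).measurable).ennreal_ofReal

/-- the candidate-nearest-center index set -/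
def argA (x : Fin K → Rd d) (z : Rd d) : Finset (Fin K) :=
  Finset.univ.filter fun k => ∀ j, ‖z - x k‖ ≤ ‖z - x j‖

lemma argA_nonempty (x : Fin K → Rd d) (z : Rd d) : (argA x z).Nonempty := by
  obtain ⟨k, -, hk⟩ := Finset.exists_min_image Finset.univ (fun k => ‖z - x k‖) univ_ne
  exact ⟨k, by simpa [argA] using fun j => hk j (Finset.mem_univ j)⟩

/-- tie-broken nearest center index -/
def nIdx (x : Fin K → Rd d) (z : Rd d) : Fin K := (argA x z).min' (argA_nonempty x z)

lemma mem_voronoi_nIdx (x : Fin K → Rd d) (z : Rd d) : z ∈ voronoi x (nIdx x z) := by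
  have h1 : nIdx x z ∈ argA x z := Finset.min'_mem _ _
  rw [argA, Finset.mem_filter] at h1
  refine ⟨h1.2, fun j hj => ?_⟩
  have hj' : j ∉ argA x z := fun hmem =>
    absurd (Finset.min'_le _ _ hmem) (not_le.2 hj)
  rw [argA, Finset.mem_filter] at hj'
  push_neg at hj'
  obtain ⟨j', hj'⟩ := hj' (Finset.mem_univ j)
  exact lt_of_le_of_lt (h1.2 j') hj'

lemma voronoi_eq_fiber (x : Fin K → Rd d) (k : Fin K) :
    voronoi x k = nIdx x ⁻¹' {k} := by
  ext z
  simp only [Set.mem_preimage, Set.mem_singleton_iff]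
  constructor
  · rintro ⟨hle, hlt⟩
    have hk : k ∈ argA x z := by simpa [argA] using hle
    have h1 : nIdx x z ≤ k := Finset.min'_le _ _ hk
    rcases lt_or_eq_of_le h1 with h | h
    · exfalso
      have h2 := (mem_voronoi_nIdx x z).1 k
      exact absurd h2 (not_le.2 (hlt _ h))
    · exact h
  · rintro rfl
    exact mem_voronoi_nIdx x z

lemma measurableSet_voronoi (x : Fin K → Rd d) (k : Fin K) :
    MeasurableSet (voronoi x k) := by
  have hc : ∀ j : Fin K, Continuous fun z : Rd d => ‖z - x j‖ := fun j =>
    (continuous_id.sub continuous_const).norm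
  have : voronoi x k =
      (⋂ j, {z : Rd d | ‖z - x k‖ ≤ ‖z - x j‖}) ∩
        ⋂ j, ⋂ (_ : j < k), {z : Rd d | ‖z - x k‖ < ‖z - x j‖} := by
    ext z; simp [voronoi, Set.mem_iInter]
  rw [this]
  exact (MeasurableSet.iInter fun j => (isClosed_le (hc k) (hc j)).measurableSet).inter
    (MeasurableSet.iInter fun j => MeasurableSet.iInter fun _ =>
      (isOpen_lt (hc k) (hc j)).measurableSet)

lemma measurable_nIdx (x : Fin K → Rd d) : Measurable (nIdx x) :=
  measurable_to_countable' fun k => by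
    rw [← voronoi_eq_fiber]; exact measurableSet_voronoi x k

/-- the Voronoi transport map -/
def T (x : Fin K → Rd d) (z : Rd d) : Rd d := x (nIdx x z)

lemma measurable_T (x : Fin K → Rd d) : Measurable (T x) :=
  (measurable_from_top (f := x)).comp (measurable_nIdx x)

lemma norm_sub_T (x : Fin K → Rd d) (z : Rd d) : ‖z - T x z‖ = minDist x z := by
  refine le_antisymm ?_ (minDist_le x z _)
  exact Finset.le_inf' _ _ fun j _ => (mem_voronoi_nIdx x z).1 j

lemma discreteMeasure_apply (a : Fin K → ℝ≥0∞) (x : Fin K → Rd d)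
    {s : Set (Rd d)} (hs : MeasurableSet s) :
    discreteMeasure a x s = ∑ k, if x k ∈ s then a k else 0 := by
  rw [discreteMeasure, Measure.finset_sum_apply]
  refine Finset.sum_congr rfl fun k _ => ?_
  rw [Measure.smul_apply, Measure.dirac_apply' _ hs, Set.indicator_apply]
  simp [mul_comm]

/-- the Voronoi coupling -/
def cpl (x : Fin K → Rd d) (ν : Measure (Rd d)) : Measure (Rd d × Rd d) :=
  ν.map fun z => (T x z, z)

lemma measurable_cplmap (x : Fin K → Rd d) :
    Measurable fun z : Rd d => (T x z, z) :=
  (measurable_T x).prodMk measurable_id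

lemma cpl_snd (x : Fin K → Rd d) (ν : Measure (Rd d)) :
    (cpl x ν).map Prod.snd = ν := by
  rw [cpl, Measure.map_map measurable_snd (measurable_cplmap x)]
  have : (Prod.snd ∘ fun z : Rd d => (T x z, z)) = id := rfl
  rw [this, Measure.map_id]

lemma cpl_fst (x : Fin K → Rd d) (ν : Measure (Rd d)) :
    (cpl x ν).map Prod.fst = discreteMeasure (fun k => ν (voronoi x k)) x := by
  rw [cpl, Measure.map_map measurable_fst (measurable_cplmap x)]
  have hTc : (Prod.fst ∘ fun z : Rd d => (T x z, z)) = T x := rfl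
  rw [hTc]
  ext s hs
  rw [Measure.map_apply (measurable_T x) hs, discreteMeasure_apply _ _ hs]
  have hpre : T x ⁻¹' s = ⋃ k, if x k ∈ s then voronoi x k else ∅ := by
    ext z
    simp only [Set.mem_preimage, Set.mem_iUnion]
    constructor
    · intro hz
      refine ⟨nIdx x z, ?_⟩
      simp only [T] at hz
      rw [if_pos hz]
      exact mem_voronoi_nIdx x z
    · rintro ⟨k, hk⟩
      by_cases hxk : x k ∈ s
      · rw [if_pos hxk] at hk
        rw [voronoi_eq_fiber] at hk
        simp only [Set.mem_preimage, Set.mem_singleton_iff] at hk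
        show T x z ∈ s
        rw [T, hk]; exact hxk
      · rw [if_neg hxk] at hk; exact absurd hk (Set.notMem_empty z)
  rw [hpre, measure_iUnion, tsum_fintype]
  · refine Finset.sum_congr rfl fun k _ => ?_
    split_ifs <;> simp
  · intro i j hij
    simp only [Function.onFun]
    have hd : Disjoint (voronoi x i) (voronoi x j) := by
      rw [voronoi_eq_fiber, voronoi_eq_fiber]
      exact Disjoint.preimage _ (by simpa using hij)
    split_ifs <;> simp [hd]
  · intro k
    split_ifs
    · exact measurableSet_voronoi x k
    · exact MeasurableSet.empty

lemma measurable_cost {d : ℕ} :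
    Measurable fun p : Rd d × Rd d => ENNReal.ofReal (‖p.1 - p.2‖ ^ 2) :=
  (((continuous_fst.sub continuous_snd).norm.pow 2).measurable).ennreal_ofReal

lemma cpl_cost (x : Fin K → Rd d) (ν : Measure (Rd d)) :
    ∫⁻ p, ENNReal.ofReal (‖p.1 - p.2‖ ^ 2) ∂(cpl x ν) = Q x ν := by
  rw [cpl, lintegral_map measurable_cost (measurable_cplmap x)]
  refine lintegral_congr fun z => ?_
  rw [← norm_sub_T x z, norm_sub_rev]

lemma Q_le_W2sq (a : Fin K → ℝ≥0∞) (x : Fin K → Rd d) (ν : Measure (Rd d)) :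
    Q x ν ≤ W2sq (discreteMeasure a x) ν := by
  refine le_iInf fun π => le_iInf fun hπ => le_iInf fun h1 => le_iInf fun h2 => ?_
  have hS : MeasurableSet (Set.range x) := (Set.finite_range x).measurableSet
  have h0 : π (Prod.fst ⁻¹' (Set.range x)ᶜ) = 0 := by
    rw [← Measure.map_apply measurable_fst hS.compl, h1,
      discreteMeasure_apply _ _ hS.compl]
    simp
  have hae : ∀ᵐ p ∂π, p.1 ∈ Set.range x := by
    rw [ae_iff]
    exact h0
  calc Q x ν = ∫⁻ p, ENNReal.ofReal ((minDist x p.2) ^ 2) ∂π := by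
        rw [← h2, Q, lintegral_map (measurable_qint x) measurable_snd]
    _ ≤ ∫⁻ p, ENNReal.ofReal (‖p.1 - p.2‖ ^ 2) ∂π := by
        refine lintegral_mono_ae (hae.mono fun p hp => ?_)
        obtain ⟨k, hk⟩ := hp
        refine ENNReal.ofReal_le_ofReal ?_
        have h1 : minDist x p.2 ≤ ‖p.1 - p.2‖ := by
          rw [← hk, norm_sub_rev]; exact minDist_le x p.2 k
        exact pow_le_pow_left₀ (minDist_nonneg x p.2) h1 2

lemma W2sq_voronoi (x : Fin K → Rd d) (ν : Measure (Rd d)) [IsProbabilityMeasure ν] :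
    W2sq (discreteMeasure (fun k => ν (voronoi x k)) x) ν = Q x ν := by
  refine le_antisymm ?_ (Q_le_W2sq _ _ _)
  have hprob : IsProbabilityMeasure (cpl x ν) :=
    Measure.isProbabilityMeasure_map (measurable_cplmap x).aemeasurable
  calc W2sq (discreteMeasure (fun k => ν (voronoi x k)) x) ν
      ≤ ∫⁻ p, ENNReal.ofReal (‖p.1 - p.2‖ ^ 2) ∂(cpl x ν) := by
        exact iInf_le_of_le (cpl x ν) (iInf_le_of_le hprob
          (iInf_le_of_le (cpl_fst x ν) (iInf_le_of_le (cpl_snd x ν) le_rfl)))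
    _ = Q x ν := cpl_cost x ν

lemma sum_voronoi_measure (x : Fin K → Rd d) (ν : Measure (Rd d)) :
    ∑ k, ν (voronoi x k) = ν Set.univ := by
  have hu : ⋃ k, voronoi x k = Set.univ := by
    refine Set.eq_univ_of_forall fun z => Set.mem_iUnion.2 ⟨nIdx x z, mem_voronoi_nIdx x z⟩
  rw [← hu, measure_iUnion, tsum_fintype]
  · intro i j hij
    simp only [Function.onFun]
    rw [voronoi_eq_fiber, voronoi_eq_fiber]
    exact Disjoint.preimage _ (by simpa using hij)
  · exact measurableSet_voronoi x

end BarKMeans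

open BarKMeans

/-- The Wasserstein barycenter problem with varying weights is equivalent to K-means
quantization of the mean measure. -/
theorem stmt0 {d : ℕ} (K N : ℕ) (hK : 1 ≤ K) (hN : 1 ≤ N)
    (μ : Fin N → Measure (Rd d))
    (hprob : ∀ i, IsProbabilityMeasure (μ i))
    (hac : ∀ i, μ i ≪ volume)
    (hmom : ∀ i, FiniteSecondMoment (μ i))
    (μbar : Measure (Rd d)) (hbar : μbar = (N : ℝ≥0∞)⁻¹ • ∑ i, μ i) :
    (⨅ (x : Fin K → Rd d) (a : Fin N → Fin K → ℝ)
        (_ : ∀ i, (∀ k, 0 ≤ a i k) ∧ ∑ k, a i k = 1),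
        (N : ℝ≥0∞)⁻¹ * ∑ i, W2sq (discreteMeasure (fun k => ENNReal.ofReal (a i k)) x) (μ i))
      = ⨅ x : Fin K → Rd d,
          W2sq (discreteMeasure (fun k => μbar (voronoi x k)) x) μbar := by
  haveI : NeZero K := ⟨by omega⟩
  have hNne : (N : ℝ≥0∞) ≠ 0 := by
    exact_mod_cast Nat.cast_ne_zero.2 (by omega)
  haveI hbarprob : IsProbabilityMeasure μbar := by
    constructor
    rw [hbar]
    simp only [Measure.smul_apply, Measure.coe_finset_sum, Finset.sum_apply, smul_eq_mul]
    rw [Finset.sum_congr rfl fun i _ => measure_univ]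
    simp only [Finset.sum_const, Finset.card_univ, Fintype.card_fin, nsmul_eq_mul, mul_one]
    exact ENNReal.inv_mul_cancel hNne (ENNReal.natCast_ne_top N)
  -- Q linearity
  have hQbar : ∀ x : Fin K → Rd d, Q x μbar = (N : ℝ≥0∞)⁻¹ * ∑ i, Q x (μ i) := by
    intro x
    rw [Q, hbar, lintegral_smul_measure, lintegral_finset_sum_measure]
    rfl
  have key : ∀ x : Fin K → Rd d,
      (⨅ (a : Fin N → Fin K → ℝ)
        (_ : ∀ i, (∀ k, 0 ≤ a i k) ∧ ∑ k, a i k = 1),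
        (N : ℝ≥0∞)⁻¹ * ∑ i, W2sq (discreteMeasure (fun k => ENNReal.ofReal (a i k)) x) (μ i))
      = Q x μbar := by
    intro x
    rw [hQbar x]
    refine le_antisymm ?_ ?_
    · -- use Voronoi weights
      set a : Fin N → Fin K → ℝ := fun i k => (μ i (voronoi x k)).toReal with ha
      have hcon : ∀ i, (∀ k, 0 ≤ a i k) ∧ ∑ k, a i k = 1 := by
        intro i
        refine ⟨fun k => ENNReal.toReal_nonneg, ?_⟩
        rw [ha]
        rw [← ENNReal.toReal_sum fun k _ => measure_ne_top _ _]
        rw [sum_voronoi_measure x (μ i), measure_univ, ENNReal.toReal_one]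
      refine le_trans (iInf₂_le a hcon) ?_
      refine le_of_eq ?_
      congr 1
      refine Finset.sum_congr rfl fun i _ => ?_
      have : (fun k => ENNReal.ofReal (a i k)) = fun k => μ i (voronoi x k) := by
        funext k
        rw [ha]
        exact ENNReal.ofReal_toReal (measure_ne_top _ _)
      rw [this]
      exact W2sq_voronoi x (μ i)
    · refine le_iInf₂ fun a hcon => ?_
      refine mul_le_mul_right (Finset.sum_le_sum fun i _ => ?_) _
      exact Q_le_W2sq _ x (μ i)
  calc (⨅ (x : Fin K → Rd d) (a : Fin N → Fin K → ℝ)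
        (_ : ∀ i, (∀ k, 0 ≤ a i k) ∧ ∑ k, a i k = 1),
        (N : ℝ≥0∞)⁻¹ * ∑ i, W2sq (discreteMeasure (fun k => ENNReal.ofReal (a i k)) x) (μ i))
      = ⨅ x : Fin K → Rd d, Q x μbar := iInf_congr key
    _ = ⨅ x : Fin K → Rd d,
          W2sq (discreteMeasure (fun k => μbar (voronoi x k)) x) μbar :=
        (iInf_congr fun x => (W2sq_voronoi x μbar).symm)
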